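/- Let Y = [W, Q] with W ∈ ℝ^{m×k}, Q ∈ ℝ^{m×(r−k)}, and let f satisfy strong convexity with parameter μ, L-Lipschitz gradient, f(0)=0 with 0 the minimizer. Define ν(W) = minᵢ ‖wᵢ‖₂, γ(W) = min_{i≠j} ‖wᵢ−w_j‖₂, ω(W) = min(ν(W), γ(W)/√2), K(Q) = maxᵢ ‖qᵢ‖₂. If ν(W) > 2√(L/μ)·K(Q), then for any 0 ≤ δ ≤ 1/2, the maximum f* of f(Yx) over x ∈ Δ^r with xᵢ ≤ 1−δ for 1 ≤ i ≤ k satisfies f* ≤ maxᵢ f(wᵢ) − (1/2)μ(1−δ)δ·ω(W)². -/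

import Mathlib

open Filter Topology

section Aux

variable {E : Type*} [NormedAddCommGroup E] [InnerProductSpace ℝ E] [CompleteSpace E]

lemma sc_lin {f : E → ℝ} {f' : E → E} {μ : ℝ}
    (hgrad : ∀ x, HasGradientAt f (f' x) x)
    (hsc : ∀ x y : E, ∀ δ : ℝ, 0 ≤ δ → δ ≤ 1 →
      f (δ • x + (1 - δ) • y) ≤ δ * f x + (1 - δ) * f y - μ / 2 * (δ * (1 - δ)) * ‖x - y‖ ^ 2)
    (c y : E) :
    f c + (inner ℝ (f' c) (y - c) : ℝ) + μ / 2 * ‖y - c‖ ^ 2 ≤ f y := by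
  set φ : ℝ → ℝ := fun t => f (c + t • (y - c)) with hφ
  have hline : ∀ t : ℝ, HasDerivAt (fun t : ℝ => c + t • (y - c)) (y - c) t := by
    intro t
    simpa using ((hasDerivAt_id t).smul_const (y - c)).const_add c
  have hder : HasDerivAt φ (inner ℝ (f' c) (y - c) : ℝ) 0 := by
    have h1 : HasFDerivAt f ((InnerProductSpace.toDual ℝ E) (f' c)) (c + (0:ℝ) • (y - c)) := by
      simpa using (hgrad c).hasFDerivAt
    have h2 := h1.comp_hasDerivAt 0 (hline 0)
    simp only [InnerProductSpace.toDual_apply_apply] at h2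
    exact h2
  have hslope : Tendsto (fun t : ℝ => t⁻¹ * (φ t - φ 0)) (𝓝[>] 0)
      (𝓝 (inner ℝ (f' c) (y - c) : ℝ)) := by
    simpa [slope_def_field] using hder.tendsto_slope_zero_right
  have hlim2 : Tendsto (fun t : ℝ => f y - f c - μ / 2 * (1 - t) * ‖y - c‖ ^ 2) (𝓝[>] 0)
      (𝓝 (f y - f c - μ / 2 * (1 - 0) * ‖y - c‖ ^ 2)) := by
    apply Tendsto.mono_left _ nhdsWithin_le_nhds
    exact Continuous.tendsto (by continuity) 0
  have hev : ∀ᶠ t in 𝓝[>] (0:ℝ), t⁻¹ * (φ t - φ 0)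
      ≤ f y - f c - μ / 2 * (1 - t) * ‖y - c‖ ^ 2 := by
    filter_upwards [Ioo_mem_nhdsGT_of_mem (Set.mem_Ico.2 ⟨le_refl (0:ℝ), one_pos⟩)] with t ht
    have h := hsc y c t (le_of_lt ht.1) (le_of_lt ht.2)
    have hpt : c + t • (y - c) = t • y + (1 - t) • c := by
      rw [smul_sub, sub_smul, one_smul]; abel
    have hφ0 : φ 0 = f c := by simp [hφ]
    have hφt : φ t ≤ t * f y + (1 - t) * f c - μ / 2 * (t * (1 - t)) * ‖y - c‖ ^ 2 := by
      rw [hφ]; dsimp only; rw [hpt]; exact h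
    rw [hφ0, inv_mul_le_iff₀ ht.1]
    nlinarith [ht.1]
  have := le_of_tendsto_of_tendsto hslope hlim2 hev
  nlinarith [this]

lemma descent0 {f : E → ℝ} {f' : E → E} {L : ℝ} (hL0 : 0 ≤ L)
    (hgrad : ∀ x, HasGradientAt f (f' x) x)
    (hf0 : f 0 = 0) (hmin : ∀ y, f 0 ≤ f y)
    (hlip : ∀ x y, ‖f' x - f' y‖ ≤ L * ‖x - y‖) (y : E) :
    f y ≤ L / 2 * ‖y‖ ^ 2 := by
  have hg0 : f' 0 = 0 := by
    have h1 : IsLocalMin f 0 := (isMinOn_univ_iff.2 fun z => hmin z).isLocalMin Filter.univ_mem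
    have h2 := h1.hasFDerivAt_eq_zero (hgrad 0).hasFDerivAt
    have := (InnerProductSpace.toDual ℝ E).map_eq_zero_iff.mp (by exact_mod_cast h2)
    exact this
  -- ψ t = L/2 t² ‖y‖² - f (t • y), monotone on [0,1]
  set ψ : ℝ → ℝ := fun t => L / 2 * t ^ 2 * ‖y‖ ^ 2 - f (t • y) with hψ
  have hψder : ∀ t : ℝ, HasDerivAt ψ (L * t * ‖y‖ ^ 2 - (inner ℝ (f' (t • y)) y : ℝ)) t := by
    intro t
    have hline : HasDerivAt (fun t : ℝ => t • y) y t := by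
      simpa using (hasDerivAt_id t).smul_const y
    have h1 : HasDerivAt (fun t => f (t • y)) (inner ℝ (f' (t • y)) y : ℝ) t := by
      have := ((hgrad (t • y)).hasFDerivAt).comp_hasDerivAt t hline
      simp only [InnerProductSpace.toDual_apply_apply] at this
      exact this
    have h2 : HasDerivAt (fun t : ℝ => L / 2 * t ^ 2 * ‖y‖ ^ 2) (L * t * ‖y‖ ^ 2) t := by
      have := ((hasDerivAt_pow 2 t).const_mul (L / 2)).mul_const (‖y‖ ^ 2)
      exact this.congr_deriv (by ring)
    exact h2.sub h1
  have hmono : MonotoneOn ψ (Set.Icc 0 1) := by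
    apply monotoneOn_of_deriv_nonneg (convex_Icc 0 1)
    · exact Continuous.continuousOn (by
        have : Continuous ψ := by
          have hc : Continuous f := by
            have : Differentiable ℝ f := fun z => ((hgrad z).hasFDerivAt).differentiableAt
            exact this.continuous
          fun_prop
        exact this)
    · intro t ht
      exact ((hψder t).differentiableAt).differentiableWithinAt
    · intro t ht
      rw [(hψder t).deriv]
      have ht0 : 0 ≤ t := by
        rcases ht with ht
        simp [interior_Icc] at ht
        exact ht.1.le
      have hb : (inner ℝ (f' (t • y)) y : ℝ) ≤ ‖f' (t • y)‖ * ‖y‖ := real_inner_le_norm _ _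
      have hb2 : ‖f' (t • y)‖ ≤ L * (t * ‖y‖) := by
        have := hlip (t • y) 0
        simpa [hg0, norm_smul, abs_of_nonneg ht0] using this
      nlinarith [norm_nonneg y, norm_nonneg (f' (t • y)), mul_nonneg (mul_nonneg hL0 ht0) (norm_nonneg y)]
  have h01 := hmono (Set.mem_Icc.2 ⟨le_refl 0, zero_le_one⟩) (Set.mem_Icc.2 ⟨zero_le_one, le_refl 1⟩) zero_le_one
  simp [hψ, hf0] at h01
  linarith [h01]

lemma pairwise_id {ι : Type*} [Fintype ι] (lam : ι → ℝ) (z : ι → E)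
    (hsum : ∑ i, lam i = 1) :
    ∑ i, lam i * ‖z i - ∑ j, lam j • z j‖ ^ 2
      = 1 / 2 * ∑ i, ∑ j, lam i * lam j * ‖z i - z j‖ ^ 2 := by
  set c : E := ∑ j, lam j • z j with hc
  have hinner : ∀ v : E, (inner ℝ v c : ℝ) = ∑ j, lam j * (inner ℝ v (z j) : ℝ) := by
    intro v
    rw [hc, inner_sum]
    exact Finset.sum_congr rfl fun j _ => real_inner_smul_right _ _ _
  have hcc : (inner ℝ c c : ℝ) = ∑ i, lam i * (inner ℝ (z i) c : ℝ) := by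
    rw [hc, sum_inner]
    exact Finset.sum_congr rfl fun i _ => real_inner_smul_left _ _ _
  have hexp : ∀ a b : E, ‖a - b‖ ^ 2 = ‖a‖ ^ 2 - 2 * (inner ℝ a b : ℝ) + ‖b‖ ^ 2 :=
    fun a b => norm_sub_sq_real a b
  have hnc : ‖c‖ ^ 2 = (inner ℝ c c : ℝ) := (real_inner_self_eq_norm_sq c).symm
  calc ∑ i, lam i * ‖z i - c‖ ^ 2
      = ∑ i, (lam i * ‖z i‖ ^ 2 - 2 * (lam i * (inner ℝ (z i) c : ℝ)) + lam i * (inner ℝ c c : ℝ)) := by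
        refine Finset.sum_congr rfl fun i _ => ?_
        rw [hexp, hnc]; ring
    _ = ∑ i, lam i * ‖z i‖ ^ 2 - 2 * (inner ℝ c c : ℝ) + (inner ℝ c c : ℝ) := by
        rw [Finset.sum_add_distrib, Finset.sum_sub_distrib, ← Finset.mul_sum, ← hcc,
          ← Finset.sum_mul, hsum, one_mul]
    _ = ∑ i, lam i * ‖z i‖ ^ 2 - (inner ℝ c c : ℝ) := by ring
    _ = 1 / 2 * ∑ i, ∑ j, lam i * lam j * ‖z i - z j‖ ^ 2 := by
        have : ∀ i, ∑ j, lam i * lam j * ‖z i - z j‖ ^ 2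
            = lam i * ‖z i‖ ^ 2 - 2 * (lam i * (inner ℝ (z i) c : ℝ))
              + lam i * ∑ j, lam j * ‖z j‖ ^ 2 := by
          intro i
          have : ∑ j, lam i * lam j * ‖z i - z j‖ ^ 2
              = ∑ j, (lam i * lam j * ‖z i‖ ^ 2 - 2 * (lam i * (lam j * (inner ℝ (z i) (z j) : ℝ)))
                  + lam i * (lam j * ‖z j‖ ^ 2)) := by
            refine Finset.sum_congr rfl fun j _ => ?_
            rw [hexp]; ring
          rw [this, Finset.sum_add_distrib, Finset.sum_sub_distrib]
          rw [← Finset.mul_sum, ← Finset.mul_sum, ← Finset.mul_sum, ← hinner]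
          have hx : ∑ x : ι, lam i * lam x * ‖z i‖ ^ 2 = lam i * ‖z i‖ ^ 2 := by
            simp only [show ∀ x, lam i * lam x * ‖z i‖ ^ 2 = lam i * ‖z i‖ ^ 2 * lam x
              from fun x => by ring, ← Finset.mul_sum, hsum, mul_one]
          rw [hx]
        rw [Finset.sum_congr rfl fun i _ => this i]
        rw [Finset.sum_add_distrib, Finset.sum_sub_distrib, ← Finset.mul_sum, ← hcc,
          ← Finset.sum_mul, hsum, one_mul]
        ring

lemma jensen_sc {f : E → ℝ} {f' : E → E} {μ : ℝ}
    {ι : Type*} [Fintype ι] (lam : ι → ℝ) (z : ι → E)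
    (h0 : ∀ i, 0 ≤ lam i) (hsum : ∑ i, lam i = 1)
    (sc_lin : ∀ c y : E, f c + (inner ℝ (f' c) (y - c) : ℝ) + μ / 2 * ‖y - c‖ ^ 2 ≤ f y) :
    f (∑ j, lam j • z j) ≤ ∑ i, lam i * f (z i)
      - μ / 2 * ∑ i, lam i * ‖z i - ∑ j, lam j • z j‖ ^ 2 := by
  set c : E := ∑ j, lam j • z j with hc
  have key : ∀ i, lam i * f c + lam i * (inner ℝ (f' c) (z i - c) : ℝ)
      + lam i * (μ / 2 * ‖z i - c‖ ^ 2) ≤ lam i * f (z i) := by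
    intro i
    have := sc_lin c (z i)
    nlinarith [mul_le_mul_of_nonneg_left this (h0 i)]
  have hsum2 := Finset.sum_le_sum (fun i (_ : i ∈ Finset.univ) => key i)
  rw [Finset.sum_add_distrib, Finset.sum_add_distrib, ← Finset.sum_mul, hsum, one_mul] at hsum2
  have hzero : ∑ i, lam i * (inner ℝ (f' c) (z i - c) : ℝ) = 0 := by
    have : ∑ i, lam i * (inner ℝ (f' c) (z i - c) : ℝ)
        = (inner ℝ (f' c) (∑ i, lam i • (z i - c)) : ℝ) := by
      rw [inner_sum]
      exact (Finset.sum_congr rfl fun i _ => (real_inner_smul_right _ _ _).symm)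
    rw [this]
    have : ∑ i, lam i • (z i - c) = 0 := by
      simp only [smul_sub, Finset.sum_sub_distrib, ← hc, ← Finset.sum_smul, hsum, one_smul,
        sub_self]
    rw [this, inner_zero_right]
  rw [hzero, add_zero] at hsum2
  have : ∑ i, lam i * (μ / 2 * ‖z i - c‖ ^ 2) = μ / 2 * ∑ i, lam i * ‖z i - c‖ ^ 2 := by
    rw [Finset.mul_sum]; exact Finset.sum_congr rfl fun i _ => by ring
  rw [this] at hsum2
  linarith

lemma Pbound {k k' : ℕ} (a : Fin k → ℝ) (b : Fin k' → ℝ) (l0 : ℝ)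
    (w : Fin k → E) (q : Fin k' → E) (ν γ η : ℝ)
    (hν0 : 0 ≤ ν) (hγ0 : 0 ≤ γ) (hη0 : 0 ≤ η)
    (ha : ∀ i, 0 ≤ a i) (hb : ∀ j, 0 ≤ b j) (hl0 : 0 ≤ l0)
    (hνle : ∀ i, ν ≤ ‖w i‖) (hγle : ∀ i j, i ≠ j → γ ≤ ‖w i - w j‖)
    (hηle : ∀ i j, η ≤ ‖w i - q j‖) :
    2 * (l0 * (∑ i, a i) * ν ^ 2) + ((∑ i, a i) ^ 2 - ∑ i, a i ^ 2) * γ ^ 2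
        + 2 * ((∑ i, a i) * (∑ j, b j) * η ^ 2)
      ≤ ∑ o : Option (Fin k ⊕ Fin k'), ∑ o' : Option (Fin k ⊕ Fin k'),
          (Option.elim o l0 (Sum.elim a b)) * (Option.elim o' l0 (Sum.elim a b))
            * ‖(Option.elim o (0:E) (Sum.elim w q)) - (Option.elim o' (0:E) (Sum.elim w q))‖ ^ 2 := by
  simp only [Fintype.sum_option, Fintype.sum_sum_type, Option.elim_none, Option.elim_some,
    Sum.elim_inl, Sum.elim_inr, sub_self, norm_zero, mul_zero, zero_add, zero_sub, sub_zero,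
    norm_neg, Finset.sum_add_distrib]
  have hw2 : ∀ i, ν ^ 2 ≤ ‖w i‖ ^ 2 := fun i => pow_le_pow_left₀ hν0 (hνle i) 2
  have hB1 : (∑ i, a i) * l0 * ν ^ 2 ≤ ∑ i, a i * l0 * ‖w i‖ ^ 2 := by
    have : ∀ i, a i * l0 * ν ^ 2 ≤ a i * l0 * ‖w i‖ ^ 2 := fun i =>
      mul_le_mul_of_nonneg_left (hw2 i) (mul_nonneg (ha i) hl0)
    calc (∑ i, a i) * l0 * ν ^ 2 = ∑ i, a i * l0 * ν ^ 2 := by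
          rw [Finset.sum_mul, Finset.sum_mul]
    _ ≤ _ := Finset.sum_le_sum fun i _ => this i
  have hB2 : l0 * (∑ i, a i) * ν ^ 2 ≤ ∑ i, l0 * a i * ‖w i‖ ^ 2 := by
    have : ∀ i, l0 * a i * ν ^ 2 ≤ l0 * a i * ‖w i‖ ^ 2 := fun i =>
      mul_le_mul_of_nonneg_left (hw2 i) (mul_nonneg hl0 (ha i))
    calc l0 * (∑ i, a i) * ν ^ 2 = ∑ i, l0 * a i * ν ^ 2 := by
          rw [Finset.mul_sum, Finset.sum_mul]
    _ ≤ _ := Finset.sum_le_sum fun i _ => this i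
  have hB3 : (∑ i, a i) ^ 2 * γ ^ 2 - (∑ i, a i ^ 2) * γ ^ 2
      ≤ ∑ i, ∑ j, a i * a j * ‖w i - w j‖ ^ 2 := by
    have per : ∀ i j, a i * a j * γ ^ 2 - (if j = i then a i * a j * γ ^ 2 else 0)
        ≤ a i * a j * ‖w i - w j‖ ^ 2 := by
      intro i j
      by_cases h : j = i
      · subst h
        rw [if_pos rfl, sub_self]
        exact mul_nonneg (mul_nonneg (ha j) (ha j)) (sq_nonneg _)
      · rw [if_neg h, sub_zero]
        exact mul_le_mul_of_nonneg_left
          (pow_le_pow_left₀ hγ0 (hγle i j (Ne.symm h)) 2)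
          (mul_nonneg (ha i) (ha j))
    have h1 := Finset.sum_le_sum fun i (_ : i ∈ Finset.univ) =>
      Finset.sum_le_sum fun j (_ : j ∈ Finset.univ) => per i j
    have h2 : ∑ i, ∑ j, (a i * a j * γ ^ 2 - (if j = i then a i * a j * γ ^ 2 else 0))
        = (∑ i, a i) ^ 2 * γ ^ 2 - (∑ i, a i ^ 2) * γ ^ 2 := by
      have h3 : ∀ i, ∑ j, (a i * a j * γ ^ 2 - (if j = i then a i * a j * γ ^ 2 else 0))
          = (∑ j, a i * a j * γ ^ 2) - a i * a i * γ ^ 2 := by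
        intro i
        rw [Finset.sum_sub_distrib]
        congr 1
        simp
      rw [Finset.sum_congr rfl fun i _ => h3 i, Finset.sum_sub_distrib]
      have h4 : ∑ i, ∑ j, a i * a j * γ ^ 2 = (∑ i, a i) ^ 2 * γ ^ 2 := by
        rw [sq (∑ i, a i), Finset.sum_mul_sum]
        rw [Finset.sum_mul]
        refine Finset.sum_congr rfl fun i _ => ?_
        rw [Finset.sum_mul]
      have h5 : ∑ i, a i * a i * γ ^ 2 = (∑ i, a i ^ 2) * γ ^ 2 := by
        rw [Finset.sum_mul]
        exact Finset.sum_congr rfl fun i _ => by ring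
      rw [h4, h5]
    linarith [h1, h2.symm.le, h2.le]
  have hη2 : ∀ i j, η ^ 2 ≤ ‖w i - q j‖ ^ 2 := fun i j =>
    pow_le_pow_left₀ hη0 (hηle i j) 2
  have hB5 : (∑ i, a i) * (∑ j, b j) * η ^ 2 ≤ ∑ i, ∑ j, a i * b j * ‖w i - q j‖ ^ 2 := by
    have h1 : ∑ i, ∑ j, a i * b j * η ^ 2 ≤ ∑ i, ∑ j, a i * b j * ‖w i - q j‖ ^ 2 :=
      Finset.sum_le_sum fun i _ => Finset.sum_le_sum fun j _ =>
        mul_le_mul_of_nonneg_left (hη2 i j) (mul_nonneg (ha i) (hb j))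
    have h2 : ∑ i, ∑ j, a i * b j * η ^ 2 = (∑ i, a i) * (∑ j, b j) * η ^ 2 := by
      simp only [Finset.sum_mul, Finset.mul_sum]
      rw [Finset.sum_comm]
    linarith
  have hB4 : (∑ j, b j) * (∑ i, a i) * η ^ 2 ≤ ∑ j, ∑ i, b j * a i * ‖q j - w i‖ ^ 2 := by
    have h1 : ∑ j, ∑ i, b j * a i * η ^ 2 ≤ ∑ j, ∑ i, b j * a i * ‖q j - w i‖ ^ 2 :=
      Finset.sum_le_sum fun j _ => Finset.sum_le_sum fun i _ => by
        rw [norm_sub_rev]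
        exact mul_le_mul_of_nonneg_left (hη2 i j) (mul_nonneg (hb j) (ha i))
    have h2 : ∑ j, ∑ i, b j * a i * η ^ 2 = (∑ j, b j) * (∑ i, a i) * η ^ 2 := by
      simp only [Finset.sum_mul, Finset.mul_sum]
      rw [Finset.sum_comm]
    linarith
  have hN1 : (0:ℝ) ≤ ∑ j, b j * l0 * ‖q j‖ ^ 2 :=
    Finset.sum_nonneg fun j _ => mul_nonneg (mul_nonneg (hb j) hl0) (sq_nonneg _)
  have hN2 : (0:ℝ) ≤ ∑ j, l0 * b j * ‖q j‖ ^ 2 :=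
    Finset.sum_nonneg fun j _ => mul_nonneg (mul_nonneg hl0 (hb j)) (sq_nonneg _)
  have hN3 : (0:ℝ) ≤ ∑ j, ∑ j', b j * b j' * ‖q j - q j'‖ ^ 2 :=
    Finset.sum_nonneg fun j _ => Finset.sum_nonneg fun j' _ =>
      mul_nonneg (mul_nonneg (hb j) (hb j')) (sq_nonneg _)
  nlinarith [hB1, hB2, hB3, hB4, hB5, hN1, hN2, hN3]

end Aux

set_option maxHeartbeats 2000000 in
/-- bound on the maximum of `f(Yx)` over the truncated simplex, where
`Y = [W, Q]`, `ν(W) > 2√(L/μ)K(Q)`, and `0 ≤ δ ≤ 1/2`. -/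
theorem stmt_3 (m k k' : ℕ) (hk : 0 < k) (μ L : ℝ) (hμ : 0 < μ)
    (w : Fin k → EuclideanSpace ℝ (Fin m)) (q : Fin k' → EuclideanSpace ℝ (Fin m))
    (f : EuclideanSpace ℝ (Fin m) → ℝ)
    (f' : EuclideanSpace ℝ (Fin m) → EuclideanSpace ℝ (Fin m))
    (hf0 : f 0 = 0) (hnonneg : ∀ y, 0 ≤ f y) (hmin : ∀ y, f 0 ≤ f y)
    (hgrad : ∀ x, HasGradientAt f (f' x) x)
    (hlip : ∀ x y, ‖f' x - f' y‖ ≤ L * ‖x - y‖)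
    (hsc : ∀ x y : EuclideanSpace ℝ (Fin m), ∀ δ : ℝ, 0 ≤ δ → δ ≤ 1 →
      f (δ • x + (1 - δ) • y) ≤ δ * f x + (1 - δ) * f y - μ / 2 * (δ * (1 - δ)) * ‖x - y‖ ^ 2)
    (ν γ ω K : ℝ)
    (hν : ν = ⨅ i : Fin k, ‖w i‖)
    (hγ : γ = ⨅ p : {p : Fin k × Fin k // p.1 ≠ p.2}, ‖w p.1.1 - w p.1.2‖)
    (hω : ω = min ν (γ / Real.sqrt 2))
    (hK : K = ⨆ i : Fin k', ‖q i‖)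
    (hsep : 2 * Real.sqrt (L / μ) * K < ν)
    (δ : ℝ) (hδ0 : 0 ≤ δ) (hδ1 : δ ≤ 1 / 2)
    (x : Fin (k + k') → ℝ) (hx0 : ∀ i, 0 ≤ x i) (hx1 : ∑ i, x i ≤ 1)
    (hxb : ∀ i : Fin k, x (Fin.castAdd k' i) ≤ 1 - δ) :
    f (∑ i : Fin k, x (Fin.castAdd k' i) • w i + ∑ i : Fin k', x (Fin.natAdd k i) • q i)
      ≤ (⨆ i : Fin k, f (w i)) - 1 / 2 * μ * (1 - δ) * δ * ω ^ 2 := by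
  set a : Fin k → ℝ := fun i => x (Fin.castAdd k' i) with ha
  set b : Fin k' → ℝ := fun j => x (Fin.natAdd k j) with hb
  set s : ℝ := ∑ i, a i with hs
  set t : ℝ := ∑ j, b j with ht
  set σ2 : ℝ := ∑ i, (a i) ^ 2 with hσ2
  have hxsplit : ∑ i, x i = s + t := Fin.sum_univ_add x
  have hs0 : 0 ≤ s := Finset.sum_nonneg fun i _ => hx0 _
  have ht0 : 0 ≤ t := Finset.sum_nonneg fun j _ => hx0 _
  have hlam0 : 0 ≤ 1 - s - t := by rw [hxsplit] at hx1; linarith only [hx1]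
  -- scalar facts
  have i0 : Fin k := ⟨0, hk⟩
  have hν0 : 0 ≤ ν := by rw [hν]; exact Real.iInf_nonneg fun i => norm_nonneg _
  have hγ0 : 0 ≤ γ := by rw [hγ]; exact Real.iInf_nonneg fun p => norm_nonneg _
  have hK0 : 0 ≤ K := by rw [hK]; exact Real.iSup_nonneg fun j => norm_nonneg _
  have hsqrt0 : 0 ≤ Real.sqrt (L / μ) := Real.sqrt_nonneg _
  have hνpos : 0 < ν := lt_of_le_of_lt (by positivity) hsep
  have hνle : ∀ i, ν ≤ ‖w i‖ := by
    intro i; rw [hν]; exact ciInf_le (Finite.bddBelow_range _) i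
  have hγle : ∀ i j, i ≠ j → γ ≤ ‖w i - w j‖ := by
    intro i j h; rw [hγ]
    exact ciInf_le (Finite.bddBelow_range _) (⟨(i, j), h⟩ : {p : Fin k × Fin k // p.1 ≠ p.2})
  have hKle : ∀ j, ‖q j‖ ≤ K := by
    intro j; rw [hK]; exact le_ciSup (f := fun i => ‖q i‖) (Finite.bddAbove_range _) j
  have hω0 : 0 ≤ ω := by rw [hω]; exact le_min hν0 (by positivity)
  have hων : ω ≤ ν := by rw [hω]; exact min_le_left _ _
  have homg : ω ≤ γ / Real.sqrt 2 := by rw [hω]; exact min_le_right _ _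
  have hγω : 2 * ω ^ 2 ≤ γ ^ 2 := by
    have h2 : Real.sqrt 2 ^ 2 = 2 := Real.sq_sqrt (by norm_num)
    have hgs : (γ / Real.sqrt 2) ^ 2 = γ ^ 2 / 2 := by rw [div_pow, h2]
    linarith only [pow_le_pow_left₀ hω0 homg 2, hgs]
  -- gradient and function bounds
  have hg0 : f' 0 = 0 := by
    have h1 : IsLocalMin f 0 := (isMinOn_univ_iff.2 fun z => hmin z).isLocalMin Filter.univ_mem
    have h2 := h1.hasFDerivAt_eq_zero (hgrad 0).hasFDerivAt
    exact (InnerProductSpace.toDual ℝ _).map_eq_zero_iff.mp (by exact_mod_cast h2)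
  have hlin := sc_lin hgrad hsc
  have hlow : ∀ y, μ / 2 * ‖y‖ ^ 2 ≤ f y := by
    intro y
    have := hlin 0 y
    simpa [hf0, hg0] using this
  have hL0 : 0 ≤ L := by
    have h1 := hlip (w i0) 0
    rw [sub_zero] at h1
    have h2 : 0 < ‖w i0‖ := lt_of_lt_of_le hνpos (hνle i0)
    nlinarith only [h1, h2, norm_nonneg (f' (w i0) - f' 0)]
  have hupp : ∀ y, f y ≤ L / 2 * ‖y‖ ^ 2 := descent0 hL0 hgrad hf0 hmin hlip
  have hμL : μ ≤ L := by
    have h1 := hlow (w i0); have h2 := hupp (w i0)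
    have h3 : 0 < ‖w i0‖ ^ 2 := pow_pos (lt_of_lt_of_le hνpos (hνle i0)) 2
    nlinarith only [h1, h2, h3]
  have hT2 : Real.sqrt (L / μ) ^ 2 = L / μ := Real.sq_sqrt (by positivity)
  have hone : (1:ℝ) ≤ L / μ := (one_le_div hμ).2 hμL
  have hT1 : 1 ≤ Real.sqrt (L / μ) := by
    calc (1:ℝ) = Real.sqrt 1 := Real.sqrt_one.symm
    _ ≤ Real.sqrt (L / μ) := Real.sqrt_le_sqrt hone
  have hKν : 2 * K ≤ ν := by
    nlinarith only [mul_nonneg (sub_nonneg.2 hT1) hK0, hsep]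
  have hLK : L * K ^ 2 ≤ μ * (ν - K) ^ 2 := by
    have h1 : Real.sqrt (L / μ) * K ≤ ν - K := by
      nlinarith only [mul_nonneg (sub_nonneg.2 hT1) hK0, hsep]
    have h2 : (Real.sqrt (L / μ) * K) ^ 2 ≤ (ν - K) ^ 2 :=
      pow_le_pow_left₀ (by positivity) h1 2
    rw [mul_pow, hT2] at h2
    have h4 := mul_le_mul_of_nonneg_left h2 hμ.le
    have h5 : μ * (L / μ * K ^ 2) = L * K ^ 2 := by field_simp
    rw [h5] at h4
    exact h4
  have hLK2 : 4 * (L * K ^ 2) ≤ μ * ν ^ 2 := by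
    have h2 : (2 * Real.sqrt (L / μ) * K) ^ 2 ≤ ν ^ 2 :=
      pow_le_pow_left₀ (by positivity) hsep.le 2
    rw [show (2 * Real.sqrt (L / μ) * K) ^ 2
        = 4 * (Real.sqrt (L / μ) ^ 2 * K ^ 2) from by ring, hT2] at h2
    have h4 := mul_le_mul_of_nonneg_left h2 hμ.le
    have h5 : μ * (4 * (L / μ * K ^ 2)) = 4 * (L * K ^ 2) := by field_simp
    rw [h5] at h4
    exact h4
  have hη0 : (0:ℝ) ≤ ν - K := by linarith
  have hην : ν ≤ 2 * (ν - K) := by linarith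
  have hηle : ∀ i j, ν - K ≤ ‖w i - q j‖ := by
    intro i j
    calc ν - K ≤ ‖w i‖ - ‖q j‖ := by
          have h1 := hνle i; have h2 := hKle j; linarith only [h1, h2]
    _ ≤ ‖w i - q j‖ := norm_sub_norm_le _ _
  set M : ℝ := ⨆ i, f (w i) with hM
  have hMle : ∀ i, f (w i) ≤ M := by
    intro i; rw [hM]; exact le_ciSup (f := fun i => f (w i)) (Finite.bddAbove_range _) i
  have hMν : μ / 2 * ν ^ 2 ≤ M := by
    refine le_trans (le_trans ?_ (hlow (w i0))) (hMle i0)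
    have h6 : ν ^ 2 ≤ ‖w i0‖ ^ 2 := pow_le_pow_left₀ hν0 (hνle i0) 2
    linarith only [mul_le_mul_of_nonneg_left h6 (le_of_lt (half_pos hμ))]
  classical
  set lam : Option (Fin k ⊕ Fin k') → ℝ :=
    fun o => Option.elim o (1 - s - t) (Sum.elim a b) with hlamdef
  set z : Option (Fin k ⊕ Fin k') → EuclideanSpace ℝ (Fin m) :=
    fun o => Option.elim o 0 (Sum.elim w q) with hzdef
  have hlamnn : ∀ o, 0 ≤ lam o := by
    rintro (_ | (i | j))
    · simpa [hlamdef] using hlam0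
    · simpa [hlamdef] using hx0 (Fin.castAdd k' i)
    · simpa [hlamdef] using hx0 (Fin.natAdd k j)
  have hlamsum : ∑ o, lam o = 1 := by
    rw [Fintype.sum_option, Fintype.sum_sum_type]
    simp only [hlamdef, Option.elim_none, Option.elim_some, Sum.elim_inl, Sum.elim_inr]
    rw [← hs, ← ht]; ring
  have hcp : ∑ o, lam o • z o
      = ∑ i : Fin k, x (Fin.castAdd k' i) • w i + ∑ i : Fin k', x (Fin.natAdd k i) • q i := by
    rw [Fintype.sum_option, Fintype.sum_sum_type]
    simp only [hlamdef, hzdef, Option.elim_none, Option.elim_some, Sum.elim_inl, Sum.elim_inr,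
      smul_zero, zero_add]
    rfl
  have hjen := jensen_sc lam z hlamnn hlamsum hlin
  rw [pairwise_id lam z hlamsum, hcp] at hjen
  have hSf : ∑ o, lam o * f (z o) ≤ s * M + t * (L / 2 * K ^ 2) := by
    rw [Fintype.sum_option, Fintype.sum_sum_type]
    simp only [hlamdef, hzdef, Option.elim_none, Option.elim_some, Sum.elim_inl, Sum.elim_inr,
      hf0, mul_zero, zero_add]
    have h1 : ∑ i : Fin k, a i * f (w i) ≤ ∑ i : Fin k, a i * M :=
      Finset.sum_le_sum fun i _ => mul_le_mul_of_nonneg_left (hMle i) (hx0 _)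
    have h2 : ∑ j : Fin k', b j * f (q j) ≤ ∑ j : Fin k', b j * (L / 2 * K ^ 2) := by
      refine Finset.sum_le_sum fun j _ => mul_le_mul_of_nonneg_left
        (le_trans (hupp (q j)) ?_) (hx0 _)
      have h3 : ‖q j‖ ^ 2 ≤ K ^ 2 := pow_le_pow_left₀ (norm_nonneg _) (hKle j) 2
      nlinarith only [h3, hL0]
    have h4 : ∑ i : Fin k, a i * M = s * M := by rw [hs, Finset.sum_mul]
    have h5 : ∑ j : Fin k', b j * (L / 2 * K ^ 2) = t * (L / 2 * K ^ 2) := by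
      rw [ht, Finset.sum_mul]
    linarith only [add_le_add h1 h2, h4.le, h4.ge, h5.le, h5.ge]
  -- lower bound for the pairwise double sum
  -- lower bound for the pairwise double sum
  have hform : ∑ o, ∑ o', lam o * lam o' * ‖z o - z o'‖ ^ 2
      = ∑ o : Option (Fin k ⊕ Fin k'), ∑ o' : Option (Fin k ⊕ Fin k'),
          (Option.elim o (1 - s - t) (Sum.elim a b)) * (Option.elim o' (1 - s - t) (Sum.elim a b))
            * ‖(Option.elim o (0 : EuclideanSpace ℝ (Fin m)) (Sum.elim w q))
                - (Option.elim o' (0 : EuclideanSpace ℝ (Fin m)) (Sum.elim w q))‖ ^ 2 := by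
    simp only [hlamdef, hzdef]
  have hPb := Pbound a b (1 - s - t) w q ν γ (ν - K) hν0 hγ0 hη0
    (fun i => hx0 _) (fun j => hx0 _) hlam0 hνle hγle hηle
  rw [← hs, ← ht, ← hσ2, ← hform] at hPb
  -- σ2 facts
  have hσ2a : σ2 ≤ (1 - δ) * s := by
    have h1 : ∀ i, a i ^ 2 ≤ (1 - δ) * a i := by
      intro i
      have h2 := hxb i
      have h3 := hx0 (Fin.castAdd k' i)
      nlinarith only [h2, h3]
    calc σ2 ≤ ∑ i, (1 - δ) * a i := Finset.sum_le_sum fun i _ => h1 i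
    _ = (1 - δ) * s := by rw [hs, Finset.mul_sum]
  have hσ2b : σ2 ≤ s ^ 2 := by
    have h1 : ∀ i, a i ^ 2 ≤ a i * s := by
      intro i
      have h2 : a i ≤ s := by
        rw [hs]; exact Finset.single_le_sum (fun i _ => hx0 _) (Finset.mem_univ i)
      nlinarith only [h2, hx0 (Fin.castAdd k' i)]
    calc σ2 ≤ ∑ i, a i * s := Finset.sum_le_sum fun i _ => h1 i
    _ = s * s := by rw [hs, Finset.sum_mul]
    _ = s ^ 2 := (sq s).symm
  have hB : δ * (1 - δ) ≤ 3*t/4 + (1-s-t)*(1+s) + s*(s-1+δ) + s*t/4 := by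
    linarith only [sq_nonneg (3*(1-s) - 2*δ), sq_nonneg δ,
      mul_nonneg (show (0:ℝ) ≤ 1 + 3*s by linarith only [hs0]) hlam0]
  have e0 : ω ^ 2 ≤ ν ^ 2 := pow_le_pow_left₀ hω0 hων 2
  have eν4 : ν ^ 2 ≤ 4 * (ν - K) ^ 2 := by nlinarith only [hην, hη0, hν0]
  have c1 : (0:ℝ) ≤ μ * ω ^ 2 / 2 := by positivity
  have hBs := mul_le_mul_of_nonneg_left hB c1
  have e1 : μ * ω ^ 2 / 2 * (3*t/4) ≤ 3*μ/8 * (t * ν ^ 2) := by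
    linarith only [mul_le_mul_of_nonneg_left e0
      (mul_nonneg (mul_nonneg (by norm_num : (0:ℝ) ≤ 3/8) hμ.le) ht0)]
  have e2 : μ * ω ^ 2 / 2 * ((1-s-t)*(1+s))
      ≤ (1-s-t) * (μ/2) * ν ^ 2 + μ/4 * (2*((1-s-t)*s*ν^2)) := by
    linarith only [mul_le_mul_of_nonneg_left e0
        (mul_nonneg (mul_nonneg (by positivity : (0:ℝ) ≤ μ/2) hlam0) hs0),
      mul_le_mul_of_nonneg_left e0
        (mul_nonneg (by positivity : (0:ℝ) ≤ μ/2) hlam0)]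
  have e3 : μ * ω ^ 2 / 2 * (s*(s-1+δ)) ≤ μ/4 * ((s^2 - σ2) * γ ^ 2) := by
    have st1 : s*(s-1+δ) ≤ s^2 - σ2 := by nlinarith only [hσ2a]
    have st2 := mul_le_mul_of_nonneg_left st1 c1
    have st3 : μ * ω^2/2 * (s^2 - σ2) ≤ μ/4 * ((s^2-σ2)*γ^2) := by
      linarith only [mul_le_mul_of_nonneg_left hγω
        (mul_nonneg (by positivity : (0:ℝ) ≤ μ/8) (sub_nonneg.2 hσ2b))]
    linarith only [st2, st3]
  have e4 : μ * ω ^ 2 / 2 * (s*t/4) ≤ μ/4 * (2*(s*t*(ν-K)^2)) := by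
    linarith only [mul_le_mul_of_nonneg_left (e0.trans eν4)
      (mul_nonneg (mul_nonneg (by positivity : (0:ℝ) ≤ μ/8) hs0) ht0)]
  have i1 : t * (L/2*K^2) ≤ t * (μ/8*ν^2) := mul_le_mul_of_nonneg_left (by linarith only [hLK2]) ht0
  have i2 : t * (μ/2*ν^2) ≤ t * M := mul_le_mul_of_nonneg_left (by linarith only [hMν]) ht0
  have i3 : (1-s-t) * (μ/2*ν^2) ≤ (1-s-t) * M := mul_le_mul_of_nonneg_left (by linarith only [hMν]) hlam0
  have hPμ := mul_le_mul_of_nonneg_left hPb (by positivity : (0:ℝ) ≤ μ/4)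
  linarith only [hjen, hSf, hBs, e1, e2, e3, e4, i1, i2, i3, hPμ]
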